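/- Let k ∈ ℕ. Suppose the bipartite graph (U, V, E) is K_{2,2}-free, D ⊆ U dominates V, |D| ≤ k, and some u ∈ U satisfies |N(u)| ≥ k + 1. Then u ∈ D. (Rule 6: any vertex of degree at least k+1 belongs to every dominating set of size at most k.) -/

import Mathlib

open Finset

/-- `D` dominates `V` in the bipartite graph with edge set `E`. -/
def Dominates {α : Type*} [DecidableEq α] (E : Finset (α × α)) (D V : Finset α) : Prop :=
  ∀ v ∈ V, ∃ u ∈ D, (u, v) ∈ E

/-- The bipartite graph `(U, V, E)` is `K_{2,2}`-free: no two distinct vertices of `U`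
have two distinct common neighbors in `V`. -/
def K22Free {α : Type*} [DecidableEq α] (U V : Finset α) (E : Finset (α × α)) : Prop :=
  ∀ u ∈ U, ∀ u' ∈ U, u ≠ u' → ∀ v ∈ V, ∀ v' ∈ V, v ≠ v' →
    ¬((u, v) ∈ E ∧ (u, v') ∈ E ∧ (u', v) ∈ E ∧ (u', v') ∈ E)

theorem stmt_13 {α : Type*} [DecidableEq α] (k : ℕ)
    (U V : Finset α) (hUV : Disjoint U V)
    (E : Finset (α × α)) (hE : E ⊆ U ×ˢ V)
    (hK : K22Free U V E)
    (D : Finset α) (hDU : D ⊆ U) (hdom : Dominates E D V) (hDk : D.card ≤ k)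
    (u : α) (hu : u ∈ U)
    (hdeg : k + 1 ≤ (V.filter (fun v => (u, v) ∈ E)).card) :
    u ∈ D := by
  by_contra huD
  classical
  have hinj : ∀ v ∈ V.filter (fun v => (u, v) ∈ E),
      ∃ d ∈ D, (d, v) ∈ E := by
    intro v hv
    exact hdom v (mem_filter.mp hv).1
  choose f hfD hfE using hinj
  have hcard : (V.filter (fun v => (u, v) ∈ E)).card ≤ D.card := by
    apply Finset.card_le_card_of_injOn (fun v => if h : v ∈ V.filter (fun v => (u, v) ∈ E) then f v h else v)
    · intro v hv
      simp only [hv, dif_pos]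
      rw [dif_pos (show v ∈ V.filter (fun v => (u, v) ∈ E) from hv)]
      exact hfD v hv
    · intro v hv v' hv' heq
      rw [Finset.mem_coe] at hv hv'
      simp only at heq
      rw [dif_pos hv, dif_pos hv'] at heq
      by_contra hne
      have hvV := (mem_filter.mp hv).1
      have hv'V := (mem_filter.mp hv').1
      have huvE := (mem_filter.mp hv).2
      have huv'E := (mem_filter.mp hv').2
      have hd := hfD v hv
      have hdu : u ≠ f v hv := fun h => huD (h ▸ hd)
      exact hK u hu (f v hv) (hDU hd) hdu v hvV v' hv'V hne
        ⟨huvE, huv'E, hfE v hv, heq ▸ hfE v' hv'⟩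
  omega
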